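/- Let G be a finite simple graph, k ≥ 2 an integer, and let (V_1, …, V_k) be a k-partition of G of minimum lexicographic order. Then for all i, j ∈ {1, …, k} and every vertex v ∈ V_i: if |N(v) ∩ V_i| ≥ 1 and e(V_i) > e(V_j) + 1, then |N(v) ∩ V_j| ≥ 2. -/

import Mathlib

open Finset

noncomputable def hfun (x : ℝ) : ℝ := Real.sqrt (2 * x + 1 / 4) - 1 / 2

variable {V : Type*} [Fintype V] [DecidableEq V]

/-- Number of edges of `G` with both endpoints in `S`. -/
def eIn (G : SimpleGraph V) [DecidableRel G.Adj] (S : Finset V) : ℕ :=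
  (Finset.univ.filter (fun p : V × V => G.Adj p.1 p.2 ∧ p.1 ∈ S ∧ p.2 ∈ S)).card / 2

/-- Number of edges of `G` with one endpoint in `S` and the other in `T` (for disjoint `S`, `T`). -/
def eCross (G : SimpleGraph V) [DecidableRel G.Adj] (S T : Finset V) : ℕ :=
  (Finset.univ.filter (fun p : V × V => G.Adj p.1 p.2 ∧ p.1 ∈ S ∧ p.2 ∈ T)).card

/-- `P` is a partition of the vertex set into `k` pairwise disjoint (possibly empty) parts. -/
def IsKPartition {k : ℕ} (P : Fin k → Finset V) : Prop :=
  (∀ i j : Fin k, i ≠ j → Disjoint (P i) (P j)) ∧ ∀ v : V, ∃ i, v ∈ P i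

/-- The number of crossing edges of a `k`-partition. -/
def crossTotal (G : SimpleGraph V) [DecidableRel G.Adj] {k : ℕ} (P : Fin k → Finset V) : ℕ :=
  ∑ i : Fin k, ∑ j : Fin k, if i < j then eCross G (P i) (P j) else 0

/-- `f_k(G)`: the maximum number of crossing edges over all `k`-partitions of `G`. -/
noncomputable def maxCut (G : SimpleGraph V) [DecidableRel G.Adj] (k : ℕ) : ℕ :=
  sSup {n : ℕ | ∃ P : Fin k → Finset V, IsKPartition P ∧ crossTotal G P = n}

/-- The values `e(V₁),…,e(V_k)` of a `k`-partition, listed in nonincreasing order. -/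
def lexVals {V : Type*} [Fintype V] [DecidableEq V] (G : SimpleGraph V) [DecidableRel G.Adj]
    {k : ℕ} (P : Fin k → Finset V) : List ℕ :=
  Multiset.sort ((Finset.univ : Finset (Fin k)).val.map fun i => eIn G (P i)) (· ≥ ·)

/-- `Q` is lexicographically smaller than `P`. -/
def LexSmaller {V : Type*} [Fintype V] [DecidableEq V] (G : SimpleGraph V) [DecidableRel G.Adj]
    {k : ℕ} (Q P : Fin k → Finset V) : Prop :=
  List.Lex (· < ·) (lexVals G Q) (lexVals G P)


lemma sum_deg_eq (G : SimpleGraph V) [DecidableRel G.Adj] (S : Finset V) :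
    (Finset.univ.filter (fun p : V × V => G.Adj p.1 p.2 ∧ p.1 ∈ S ∧ p.2 ∈ S)).card
      = ∑ a ∈ S, (G.neighborFinset a ∩ S).card := by
  rw [Finset.card_filter, ← Finset.univ_product_univ, Finset.sum_product]
  have h : ∀ a : V, (∑ b : V, if G.Adj a b ∧ a ∈ S ∧ b ∈ S then 1 else 0)
      = if a ∈ S then (G.neighborFinset a ∩ S).card else 0 := by
    intro a
    by_cases ha : a ∈ S
    · simp only [ha, true_and, if_true]
      have : G.neighborFinset a ∩ S = Finset.univ.filter (fun b => G.Adj a b ∧ b ∈ S) := by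
        ext b; simp [SimpleGraph.mem_neighborFinset]
      rw [this, Finset.card_filter]
    · simp [ha]
  rw [Finset.sum_congr rfl (fun a _ => h a), Finset.sum_ite_mem, Finset.univ_inter]

lemma eIn_erase (G : SimpleGraph V) [DecidableRel G.Adj] (S : Finset V) (v : V) (hv : v ∈ S) :
    eIn G S = eIn G (S.erase v) + (G.neighborFinset v ∩ S).card := by
  have hNv : G.neighborFinset v ∩ S.erase v = G.neighborFinset v ∩ S := by
    rw [Finset.inter_erase, Finset.erase_eq_of_notMem]
    simp
  have key : ∑ a ∈ S, (G.neighborFinset a ∩ S).card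
      = (∑ a ∈ S.erase v, (G.neighborFinset a ∩ S.erase v).card)
        + 2 * (G.neighborFinset v ∩ S).card := by
    rw [← Finset.add_sum_erase S _ hv]
    have h1 : ∀ a ∈ S.erase v, (G.neighborFinset a ∩ S).card
        = (G.neighborFinset a ∩ S.erase v).card + (if G.Adj a v then 1 else 0) := by
      intro a _
      rw [Finset.inter_erase]
      by_cases hadj : G.Adj a v
      · rw [if_pos hadj, Finset.card_erase_add_one]
        exact Finset.mem_inter.2 ⟨by simpa [SimpleGraph.mem_neighborFinset] using hadj, hv⟩
      · rw [if_neg hadj, add_zero, Finset.erase_eq_of_notMem]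
        simp only [Finset.mem_inter, SimpleGraph.mem_neighborFinset]
        tauto
    rw [Finset.sum_congr rfl h1, Finset.sum_add_distrib]
    have h2 : ∑ a ∈ S.erase v, (if G.Adj a v then 1 else 0)
        = (G.neighborFinset v ∩ S).card := by
      rw [← Finset.card_filter]
      congr 1
      rw [← hNv]
      ext a
      simp only [Finset.mem_filter, Finset.mem_inter, SimpleGraph.mem_neighborFinset]
      constructor
      · rintro ⟨h, hadj⟩; exact ⟨hadj.symm, h⟩
      · rintro ⟨hadj, h⟩; exact ⟨h, hadj.symm⟩
    rw [h2]
    ring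
  unfold eIn
  rw [sum_deg_eq, sum_deg_eq, key]
  omega

lemma lex_of_countP' :
    ∀ (L : List ℕ), ∀ (L' : List ℕ) (m : ℕ), L'.Pairwise (· ≥ ·) → L.Pairwise (· ≥ ·) →
    (∀ t, m ≤ t → L'.countP (fun x => decide (t ≤ x)) ≤ L.countP (fun x => decide (t ≤ x))) →
    (L'.countP (fun x => decide (m ≤ x)) < L.countP (fun x => decide (m ≤ x))) →
    List.Lex (· < ·) L' L := by
  intro L
  induction L with
  | nil => intro L' m _ _ _ h2; simp at h2
  | cons a L0 ih =>
    intro L' m hs' hs h1 h2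
    match L' with
    | [] => exact List.Lex.nil
    | a' :: L0' =>
      rcases lt_trichotomy a' a with h | h | h
      · exact List.Lex.rel h
      · subst h
        apply List.Lex.cons
        refine ih L0' m (List.pairwise_cons.1 hs').2 (List.pairwise_cons.1 hs).2 ?_ ?_
        · intro t ht
          have := h1 t ht
          rw [List.countP_cons, List.countP_cons] at this
          omega
        · rw [List.countP_cons, List.countP_cons] at h2
          omega
      · exfalso
        have hL : ∀ x ∈ a :: L0, x ≤ a := by
          intro x hx
          rcases List.mem_cons.1 hx with rfl | hx
          · exact le_refl _
          · exact (List.pairwise_cons.1 hs).1 x hx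
        have hL' : ∀ x ∈ a' :: L0', x ≤ a' := by
          intro x hx
          rcases List.mem_cons.1 hx with rfl | hx
          · exact le_refl _
          · exact (List.pairwise_cons.1 hs').1 x hx
        by_cases hm : m ≤ a'
        · have h3 := h1 a' hm
          have h4 : (a :: L0).countP (fun x => decide (a' ≤ x)) = 0 := by
            rw [List.countP_eq_zero]
            intro x hx
            have := hL x hx
            simp only [decide_eq_true_eq]
            omega
          have h5 : 0 < (a' :: L0').countP (fun x => decide (a' ≤ x)) := by
            rw [List.countP_cons]
            simp
          omega
        · have h4 : (a :: L0).countP (fun x => decide (m ≤ x)) = 0 := by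
            rw [List.countP_eq_zero]
            intro x hx
            have := hL x hx
            simp only [decide_eq_true_eq]
            omega
          have h5 : (a' :: L0').countP (fun x => decide (m ≤ x)) = 0 := by
            rw [List.countP_eq_zero]
            intro x hx
            have := hL' x hx
            simp only [decide_eq_true_eq]
            omega
          omega

lemma countP_lexVals (G : SimpleGraph V) [DecidableRel G.Adj] {k : ℕ}
    (P : Fin k → Finset V) (t : ℕ) :
    (lexVals G P).countP (fun x => decide (t ≤ x))
      = (Finset.univ.filter (fun l : Fin k => t ≤ eIn G (P l))).card := by
  have h : (lexVals G P).countP (fun x => decide (t ≤ x))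
      = Multiset.countP (fun x => t ≤ x)
          ((Finset.univ : Finset (Fin k)).val.map fun i => eIn G (P i)) := by
    rw [← Multiset.sort_eq ((Finset.univ : Finset (Fin k)).val.map fun i => eIn G (P i)) (· ≥ ·),
      Multiset.coe_countP]
    rfl
  rw [h, Multiset.countP_map]
  rfl

lemma lexVals_sorted (G : SimpleGraph V) [DecidableRel G.Adj] {k : ℕ}
    (P : Fin k → Finset V) : (lexVals G P).Pairwise (· ≥ ·) := by
  unfold lexVals
  exact Multiset.pairwise_sort _ _

/-- Lemma on `k`-partitions of minimum lexicographic order. -/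
theorem stmt_12 {V : Type*} [Fintype V] [DecidableEq V]
    (G : SimpleGraph V) [DecidableRel G.Adj] (k : ℕ) (hk : 2 ≤ k)
    (P : Fin k → Finset V) (hP : IsKPartition P)
    (hmin : ∀ Q : Fin k → Finset V, IsKPartition Q → ¬ LexSmaller G Q P)
    (i j : Fin k) (v : V) (hv : v ∈ P i)
    (hd : 1 ≤ (G.neighborFinset v ∩ P i).card) (he : eIn G (P j) + 1 < eIn G (P i)) :
    2 ≤ (G.neighborFinset v ∩ P j).card := by
  by_contra hcon
  push_neg at hcon
  obtain ⟨hdisj, hcov⟩ := hP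
  have hij : i ≠ j := by
    intro h
    subst h
    omega
  have hvj : v ∉ P j := fun h => (Finset.disjoint_left.1 (hdisj i j hij) hv) h
  set Q : Fin k → Finset V :=
    fun l => if l = i then (P i).erase v else if l = j then insert v (P j) else P l with hQdef
  have hQi : Q i = (P i).erase v := by simp [hQdef]
  have hQj : Q j = insert v (P j) := by simp [hQdef, hij.symm, Ne.symm hij]
  have hQl : ∀ l, l ≠ i → l ≠ j → Q l = P l := by
    intro l h1 h2
    simp [hQdef, h1, h2]
  have hsub : ∀ l, Q l ⊆ insert v (P l) := by
    intro l
    by_cases h1 : l = i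
    · subst h1
      rw [hQi]
      exact (Finset.erase_subset _ _).trans (Finset.subset_insert _ _)
    · by_cases h2 : l = j
      · subst h2
        rw [hQj]
      · rw [hQl l h1 h2]
        exact Finset.subset_insert _ _
  have hvQ : ∀ l, l ≠ j → v ∉ Q l := by
    intro l hl
    by_cases h1 : l = i
    · subst h1
      rw [hQi]
      exact Finset.notMem_erase _ _
    · rw [hQl l h1 hl]
      exact fun h => (Finset.disjoint_left.1 (hdisj i l (Ne.symm h1)) hv) h
  have hQpart : IsKPartition Q := by
    constructor
    · intro l m hlm
      rw [Finset.disjoint_left]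
      intro x hxl hxm
      by_cases hx : x = v
      · subst hx
        have hlj : l = j := by
          by_contra h
          exact hvQ l h hxl
        have hmj : m = j := by
          by_contra h
          exact hvQ m h hxm
        exact hlm (hlj.trans hmj.symm)
      · have h1 : x ∈ P l := by
          rcases Finset.mem_insert.1 (hsub l hxl) with h | h
          · exact absurd h hx
          · exact h
        have h2 : x ∈ P m := by
          rcases Finset.mem_insert.1 (hsub m hxm) with h | h
          · exact absurd h hx
          · exact h
        exact Finset.disjoint_left.1 (hdisj l m hlm) h1 h2
    · intro w
      obtain ⟨l, hl⟩ := hcov w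
      by_cases hw : w = v
      · subst hw
        exact ⟨j, by rw [hQj]; exact Finset.mem_insert_self _ _⟩
      · by_cases hli : l = i
        · refine ⟨i, ?_⟩
          rw [hQi]
          exact Finset.mem_erase.2 ⟨hw, hli ▸ hl⟩
        · by_cases hlj : l = j
          · refine ⟨j, ?_⟩
            rw [hQj]
            exact Finset.mem_insert_of_mem (hlj ▸ hl)
          · exact ⟨l, by rw [hQl l hli hlj]; exact hl⟩
  have hEi : eIn G (P i) = eIn G (Q i) + (G.neighborFinset v ∩ P i).card := by
    rw [hQi]
    exact eIn_erase G (P i) v hv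
  have hEj : eIn G (Q j) = eIn G (P j) + (G.neighborFinset v ∩ P j).card := by
    rw [hQj, eIn_erase G (insert v (P j)) v (Finset.mem_insert_self v (P j)),
      Finset.erase_insert hvj]
    have hset : G.neighborFinset v ∩ insert v (P j) = G.neighborFinset v ∩ P j := by
      ext b
      simp only [Finset.mem_inter, SimpleGraph.mem_neighborFinset, Finset.mem_insert]
      constructor
      · rintro ⟨hadj, hb | hb⟩
        · subst hb
          exact absurd hadj (G.loopless.irrefl _)
        · exact ⟨hadj, hb⟩
      · rintro ⟨hadj, hb⟩
        exact ⟨hadj, Or.inr hb⟩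
    rw [hset]
  set m := eIn G (P i) with hm
  have hm1 : eIn G (Q i) < m := by omega
  have hm2 : eIn G (Q j) < m := by omega
  have hm3 : eIn G (P j) < m := by omega
  have hsplit : ∀ (R : Fin k → Finset V) (t : ℕ),
      (Finset.univ.filter fun l => t ≤ eIn G (R l)).card
        = (∑ l ∈ Finset.univ \ ({i, j} : Finset (Fin k)), if t ≤ eIn G (R l) then 1 else 0)
          + ((if t ≤ eIn G (R i) then 1 else 0) + (if t ≤ eIn G (R j) then 1 else 0)) := by
    intro R t
    rw [Finset.card_filter, ← Finset.sum_sdiff (Finset.subset_univ ({i, j} : Finset (Fin k))),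
      Finset.sum_pair hij]
  have hrest : ∀ t : ℕ,
      (∑ l ∈ Finset.univ \ ({i, j} : Finset (Fin k)), if t ≤ eIn G (Q l) then 1 else 0)
        = ∑ l ∈ Finset.univ \ ({i, j} : Finset (Fin k)), if t ≤ eIn G (P l) then 1 else 0 := by
    intro t
    refine Finset.sum_congr rfl fun l hl => ?_
    rw [Finset.mem_sdiff, Finset.mem_insert, Finset.mem_singleton] at hl
    push_neg at hl
    rw [hQl l hl.2.1 hl.2.2]
  refine hmin Q hQpart ?_
  unfold LexSmaller
  refine lex_of_countP' (lexVals G P) (lexVals G Q) m (lexVals_sorted G Q) (lexVals_sorted G P)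
    ?_ ?_
  · intro t ht
    rw [countP_lexVals, countP_lexVals, hsplit Q t, hsplit P t, hrest t]
    have := hm1
    have := hm2
    split_ifs <;> omega
  · rw [countP_lexVals, countP_lexVals, hsplit Q m, hsplit P m, hrest m]
    have := hm1
    have := hm2
    split_ifs <;> omega
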